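/- arXiv:2511.07216 — 4 statements merged into one kernel-verified Lean document; each statement's English description precedes it below -/
import Mathlib

section
/- Let K be a compact Hausdorff topological space, n a positive integer, and ψ : K → (Fin n → ℂ) a continuous map with ‖ψ θ‖ = 1 in the ℓ²-norm for every θ ∈ K, satisfying the separation hypothesis (S): for all θ₁ ≠ θ₂ in K, ‖⟪ψ θ₁, ψ θ₂⟫_ℂ‖ < 1. Then the family F of QNode expectation functions is dense in the space C(K, ℝ) of continuous real-valued functions on K equipped with the supremum norm: for every continuous g : K → ℝ and every ε > 0 there exists f ∈ F with sup_{θ ∈ K} |f θ − g θ| ≤ ε. -/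
open scoped BigOperators ComplexConjugate
open MeasureTheory Matrix

/-- The `k`-fold tensor power of the parametrized state `ψ`:
`ψ^{⊗k} θ i = ∏_{j : Fin k} ψ θ (i j)`. -/
noncomputable def tensorPow {K : Type*} {n : ℕ} (ψ : K → EuclideanSpace ℂ (Fin n))
    (k : ℕ) (θ : K) : (Fin k → Fin n) → ℂ :=
  fun i => ∏ j : Fin k, ψ θ (i j)

/-- The family of QNode expectation functions: real parts of expectation values of Hermitian
observables (possibly on an ancilla-extended register, i.e. on a tensor power) in the state
`ψ θ`. -/
noncomputable def QNodeFamily {K : Type*} {n : ℕ}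
    (ψ : K → EuclideanSpace ℂ (Fin n)) : Set (K → ℝ) :=
  { f | ∃ (k : ℕ) (A : Matrix (Fin k → Fin n) (Fin k → Fin n) ℂ),
      Aᴴ = A ∧ ∀ θ : K, f θ = (star (tensorPow ψ k θ) ⬝ᵥ A.mulVec (tensorPow ψ k θ)).re }

namespace QNodeAux

variable {K : Type*} {n : ℕ}

/-- split equivalence for function index types -/
def splitEquiv (n k l : ℕ) : ((Fin k → Fin n) × (Fin l → Fin n)) ≃ (Fin (k + l) → Fin n) :=
  (Equiv.sumArrowEquivProdArrow _ _ _).symm.trans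
    (Equiv.arrowCongr finSumFinEquiv (Equiv.refl _))

lemma splitEquiv_castAdd (k l : ℕ) (p : (Fin k → Fin n) × (Fin l → Fin n)) :
    (fun x => splitEquiv n k l p (Fin.castAdd l x)) = p.1 := by
  funext x
  simp [splitEquiv, Equiv.sumArrowEquivProdArrow, Equiv.arrowCongr]

lemma splitEquiv_natAdd (k l : ℕ) (p : (Fin k → Fin n) × (Fin l → Fin n)) :
    (fun x => splitEquiv n k l p (Fin.natAdd k x)) = p.2 := by
  funext x
  simp [splitEquiv, Equiv.sumArrowEquivProdArrow, Equiv.arrowCongr]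

/-- Kronecker-type product of observables on tensor powers. -/
noncomputable def kron {k l : ℕ} (A : Matrix (Fin k → Fin n) (Fin k → Fin n) ℂ)
    (B : Matrix (Fin l → Fin n) (Fin l → Fin n) ℂ) :
    Matrix (Fin (k + l) → Fin n) (Fin (k + l) → Fin n) ℂ :=
  fun i j => A (fun x => i (Fin.castAdd l x)) (fun x => j (Fin.castAdd l x)) *
    B (fun x => i (Fin.natAdd k x)) (fun x => j (Fin.natAdd k x))

lemma kron_conjTranspose {k l : ℕ} (A : Matrix (Fin k → Fin n) (Fin k → Fin n) ℂ)
    (B : Matrix (Fin l → Fin n) (Fin l → Fin n) ℂ) (hA : Aᴴ = A) (hB : Bᴴ = B) :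
    (kron A B)ᴴ = kron A B := by
  ext i j
  have h1 := congrFun (congrFun hA (fun x => i (Fin.castAdd l x))) (fun x => j (Fin.castAdd l x))
  have h2 := congrFun (congrFun hB (fun x => i (Fin.natAdd k x))) (fun x => j (Fin.natAdd k x))
  simp only [Matrix.conjTranspose_apply] at h1 h2
  simp only [Matrix.conjTranspose_apply, kron, star_mul', h1, h2]
  try ring

lemma tensorPow_add (ψ : K → EuclideanSpace ℂ (Fin n)) (k l : ℕ) (θ : K) :
    tensorPow ψ (k + l) θ = fun i =>
      tensorPow ψ k θ (fun x => i (Fin.castAdd l x)) *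
        tensorPow ψ l θ (fun x => i (Fin.natAdd k x)) := by
  funext i
  simpa [tensorPow] using Fin.prod_univ_add (fun j => ψ θ (i j))

lemma dot_kron {k l : ℕ} (A : Matrix (Fin k → Fin n) (Fin k → Fin n) ℂ)
    (B : Matrix (Fin l → Fin n) (Fin l → Fin n) ℂ)
    (a : (Fin k → Fin n) → ℂ) (b : (Fin l → Fin n) → ℂ) :
    (star (fun i => a (fun x => i (Fin.castAdd l x)) * b (fun x => i (Fin.natAdd k x))) ⬝ᵥ
      (kron A B).mulVec
        (fun i => a (fun x => i (Fin.castAdd l x)) * b (fun x => i (Fin.natAdd k x))))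
    = (star a ⬝ᵥ A.mulVec a) * (star b ⬝ᵥ B.mulVec b) := by
  classical
  have hsum : ∀ F : (Fin (k + l) → Fin n) → ℂ,
      (∑ i, F i) = ∑ p : (Fin k → Fin n) × (Fin l → Fin n), F (splitEquiv n k l p) :=
    fun F => (Equiv.sum_comp (splitEquiv n k l) F).symm
  simp only [dotProduct, Matrix.mulVec, Pi.star_apply, kron]
  simp only [hsum]
  simp only [splitEquiv_castAdd, splitEquiv_natAdd]
  rw [Finset.sum_mul_sum, Fintype.sum_prod_type]
  refine Finset.sum_congr rfl fun i₁ _ => ?_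
  refine Finset.sum_congr rfl fun i₂ _ => ?_
  rw [Fintype.sum_prod_type]
  simp only [Finset.mul_sum, Finset.sum_mul]
  rw [Finset.sum_comm]
  refine Finset.sum_congr rfl fun j₂ _ => ?_
  refine Finset.sum_congr rfl fun j₁ _ => ?_
  simp only [star_mul']
  ring

lemma dot_kron_tensorPow (ψ : K → EuclideanSpace ℂ (Fin n)) (θ : K) {k l : ℕ}
    (A : Matrix (Fin k → Fin n) (Fin k → Fin n) ℂ)
    (B : Matrix (Fin l → Fin n) (Fin l → Fin n) ℂ) :
    (star (tensorPow ψ (k + l) θ) ⬝ᵥ (kron A B).mulVec (tensorPow ψ (k + l) θ))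
    = (star (tensorPow ψ k θ) ⬝ᵥ A.mulVec (tensorPow ψ k θ)) *
      (star (tensorPow ψ l θ) ⬝ᵥ B.mulVec (tensorPow ψ l θ)) := by
  rw [tensorPow_add ψ k l θ]
  exact dot_kron A B _ _

lemma dot_self (ψ : K → EuclideanSpace ℂ (Fin n)) (hψ_norm : ∀ θ : K, ‖ψ θ‖ = 1)
    (l : ℕ) (θ : K) : (star (tensorPow ψ l θ) ⬝ᵥ tensorPow ψ l θ) = 1 := by
  classical
  have hinner : (∑ x : Fin n, (starRingEnd ℂ) (ψ θ x) * ψ θ x) = 1 := by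
    have := inner_self_eq_norm_sq_to_K (𝕜 := ℂ) (ψ θ)
    rw [hψ_norm θ, PiLp.inner_apply] at this
    have h2 : (∑ x : Fin n, (starRingEnd ℂ) (ψ θ x) * ψ θ x) = ∑ x : Fin n, inner ℂ (ψ θ x) (ψ θ x) :=
      Finset.sum_congr rfl fun x _ => by simp only [RCLike.inner_apply]; ring
    rw [h2, this]; norm_num
  simp only [dotProduct, Pi.star_apply, tensorPow, RCLike.star_def, map_prod,
    ← Finset.prod_mul_distrib]
  rw [← Fintype.piFinset_univ, ← Finset.prod_univ_sum (fun _ : Fin l => (Finset.univ : Finset (Fin n)))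
    (fun _ x => (starRingEnd ℂ) (ψ θ x) * ψ θ x)]
  simp [hinner]

lemma dot_herm_im {m : Type*} [Fintype m] (A : Matrix m m ℂ) (hA : Aᴴ = A) (v : m → ℂ) :
    (star v ⬝ᵥ A.mulVec v).im = 0 := by
  rw [← Complex.conj_eq_iff_im]
  have key : star v ⬝ᵥ A.mulVec v = star (star v ⬝ᵥ A.mulVec v) := by
    conv_lhs => rw [Matrix.star_dotProduct]
    rw [Matrix.star_mulVec, hA, ← Matrix.dotProduct_mulVec]
  exact key.symm

lemma qnode_continuous (ψ : K → EuclideanSpace ℂ (Fin n)) [TopologicalSpace K]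
    (hψ_cont : Continuous ψ) (k : ℕ) (A : Matrix (Fin k → Fin n) (Fin k → Fin n) ℂ) :
    Continuous fun θ => (star (tensorPow ψ k θ) ⬝ᵥ A.mulVec (tensorPow ψ k θ)).re := by
  have hc : ∀ x : Fin n, Continuous fun θ => ψ θ x := fun x =>
    (EuclideanSpace.proj (𝕜 := ℂ) x).continuous.comp hψ_cont
  have ht : ∀ i : Fin k → Fin n, Continuous fun θ => tensorPow ψ k θ i := fun i =>
    continuous_finset_prod _ fun j _ => hc (i j)
  apply Complex.continuous_re.comp
  simp only [dotProduct, Matrix.mulVec, Pi.star_apply]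
  exact continuous_finset_sum _ fun i _ =>
    (continuous_star.comp (ht i)).mul
      (continuous_finset_sum _ fun j _ => ((ht j).const_smul (A i j)).congr (by intro θ; simp [smul_eq_mul]))

end QNodeAux


/-- Lemma 1 (uniform version): under the normalization and point-separation hypotheses on the
parametrized quantum state `ψ`, the QNode expectation functions are dense in `C(K, ℝ)` in the
supremum norm. -/
theorem qnode_universal_approximation_uniform
    {K : Type*} [TopologicalSpace K] [CompactSpace K] [T2Space K]
    {n : ℕ} (hn : 0 < n) (ψ : K → EuclideanSpace ℂ (Fin n))
    (hψ_cont : Continuous ψ) (hψ_norm : ∀ θ : K, ‖ψ θ‖ = 1)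
    (hψ_sep : ∀ θ₁ θ₂ : K, θ₁ ≠ θ₂ → ‖(inner ℂ (ψ θ₁) (ψ θ₂) : ℂ)‖ < 1) :
    ∀ g : C(K, ℝ), ∀ ε > 0, ∃ f ∈ QNodeFamily ψ, ∀ θ : K, |f θ - g θ| ≤ ε := by
  classical
  open QNodeAux in
  -- the subalgebra of continuous functions lying in the QNode family
  set S : Subalgebra ℝ C(K, ℝ) :=
    { carrier := { f : C(K, ℝ) | ⇑f ∈ QNodeFamily ψ }
      mul_mem' := by
        rintro f g ⟨k, A, hA, hfA⟩ ⟨l, B, hB, hfB⟩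
        refine ⟨k + l, QNodeAux.kron A B, QNodeAux.kron_conjTranspose A B hA hB, fun θ => ?_⟩
        rw [QNodeAux.dot_kron_tensorPow ψ θ A B]
        have h1 := QNodeAux.dot_herm_im A hA (tensorPow ψ k θ)
        have h2 := QNodeAux.dot_herm_im B hB (tensorPow ψ l θ)
        simp [ContinuousMap.mul_apply, hfA θ, hfB θ, Complex.mul_re, h1, h2]
      add_mem' := by
        rintro f g ⟨k, A, hA, hfA⟩ ⟨l, B, hB, hfB⟩
        refine ⟨k + l, QNodeAux.kron A (1 : Matrix _ _ ℂ) + QNodeAux.kron (1 : Matrix _ _ ℂ) B, ?_, fun θ => ?_⟩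
        · rw [Matrix.conjTranspose_add,
            QNodeAux.kron_conjTranspose A 1 hA Matrix.conjTranspose_one,
            QNodeAux.kron_conjTranspose 1 B Matrix.conjTranspose_one hB]
        · rw [Matrix.add_mulVec, dotProduct_add, QNodeAux.dot_kron_tensorPow ψ θ A 1,
            QNodeAux.dot_kron_tensorPow ψ θ 1 B]
          simp only [Matrix.one_mulVec, QNodeAux.dot_self ψ hψ_norm]
          simp [ContinuousMap.add_apply, hfA θ, hfB θ]
      algebraMap_mem' := by
        intro r
        refine ⟨0, (r : ℂ) • (1 : Matrix _ _ ℂ), ?_, fun θ => ?_⟩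
        · simp [Matrix.conjTranspose_smul, Complex.star_def, Complex.conj_ofReal]
        · rw [Matrix.smul_mulVec, Matrix.one_mulVec, dotProduct_smul,
            QNodeAux.dot_self ψ hψ_norm]
          simp } with hS
  -- S separates points
  have hsep : S.SeparatesPoints := by
    intro θ₁ θ₂ hne
    -- the rank-one projector onto ψ θ₁ on one register
    set A : Matrix (Fin 1 → Fin n) (Fin 1 → Fin n) ℂ :=
      fun i j => ψ θ₁ (i 0) * (starRingEnd ℂ) (ψ θ₁ (j 0)) with hAdef
    have hA : Aᴴ = A := by
      ext i j
      rw [Matrix.conjTranspose_apply]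
      simp only [Matrix.conjTranspose_apply, hAdef, star_mul', RCLike.star_def,
        Complex.conj_conj]
      ring
    have hval : ∀ θ : K, (star (tensorPow ψ 1 θ) ⬝ᵥ A.mulVec (tensorPow ψ 1 θ))
        = (starRingEnd ℂ) (inner ℂ (ψ θ₁) (ψ θ) : ℂ) * (inner ℂ (ψ θ₁) (ψ θ) : ℂ) := by
      intro θ
      have hre : ∀ F : (Fin 1 → Fin n) → ℂ,
          (∑ i, F i) = ∑ x : Fin n, F (fun _ => x) := by
        intro F
        exact (Fintype.sum_equiv (Equiv.funUnique (Fin 1) (Fin n)).symm _ _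
          (fun x => by congr)).symm
      simp only [dotProduct, Matrix.mulVec, Pi.star_apply, tensorPow,
        Fin.prod_univ_one, hAdef]
      simp only [hre]
      rw [PiLp.inner_apply]
      simp only [RCLike.inner_apply, map_sum, Complex.conj_conj, _root_.map_mul]
      rw [Finset.sum_mul_sum]
      refine Finset.sum_congr rfl fun x _ => ?_
      rw [Finset.mul_sum]
      refine Finset.sum_congr rfl fun y _ => ?_
      simp only [RCLike.star_def, _root_.map_mul, Complex.conj_conj]
      ring
    set f : C(K, ℝ) := ⟨fun θ => (star (tensorPow ψ 1 θ) ⬝ᵥ A.mulVec (tensorPow ψ 1 θ)).re,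
      QNodeAux.qnode_continuous ψ hψ_cont 1 A⟩ with hfdef
    have hmem : f ∈ S := ⟨1, A, hA, fun θ => rfl⟩
    refine ⟨⇑f, ⟨f, hmem, rfl⟩, ?_⟩
    have hfval : ∀ θ : K, f θ = Complex.normSq (inner ℂ (ψ θ₁) (ψ θ) : ℂ) := by
      intro θ
      simp only [hfdef, ContinuousMap.coe_mk]
      rw [hval θ, mul_comm, Complex.mul_conj, Complex.ofReal_re]
    have h1 : f θ₁ = 1 := by
      have h11 : (inner ℂ (ψ θ₁) (ψ θ₁) : ℂ) = 1 := by
        rw [inner_self_eq_norm_sq_to_K, hψ_norm θ₁]; norm_num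
      rw [hfval θ₁, h11]; simp
    have h2 : f θ₂ < 1 := by
      have hz := hψ_sep θ₁ θ₂ hne
      rw [hfval θ₂, Complex.normSq_eq_norm_sq]
      nlinarith [norm_nonneg (inner ℂ (ψ θ₁) (ψ θ₂) : ℂ)]
    rw [h1]
    exact fun h => absurd (h ▸ h2) (lt_irrefl _)
  intro g ε hε
  obtain ⟨⟨f, hfS⟩, hf⟩ :=
    ContinuousMap.exists_mem_subalgebra_near_continuousMap_of_separatesPoints S hsep g ε hε
  refine ⟨⇑f, hfS, fun θ => ?_⟩
  have := ContinuousMap.norm_coe_le_norm (f - g) θ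
  simp only [ContinuousMap.sub_apply, Real.norm_eq_abs] at this
  exact this.trans (le_of_lt hf)
end

section
/- Let K be a compact Hausdorff topological space, n a positive integer, and ψ : K → (Fin n → ℂ) a continuous map with ‖ψ θ‖ = 1 in the ℓ²-norm for every θ ∈ K. Then the family F of QNode expectation functions is a unital subalgebra of the real-valued functions on K: F contains every constant function K → ℝ, and F is closed under pointwise addition, pointwise multiplication, and multiplication by real scalars. -/
open scoped BigOperators ComplexConjugate
open MeasureTheory Matrix

/-- The equiv splitting a `(k+k')`-register into a `k`-register and a `k'`-register. -/
def splitEquiv (k k' n : ℕ) : (Fin (k + k') → Fin n) ≃ (Fin k → Fin n) × (Fin k' → Fin n) :=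
  (Equiv.arrowCongr finSumFinEquiv.symm (Equiv.refl _)).trans
    (Equiv.sumArrowEquivProdArrow _ _ _)

/-- The Kronecker/tensor product of two observables, reindexed to the joint register. -/
def tmat {k k' : ℕ} (n : ℕ) (A : Matrix (Fin k → Fin n) (Fin k → Fin n) ℂ)
    (B : Matrix (Fin k' → Fin n) (Fin k' → Fin n) ℂ) :
    Matrix (Fin (k + k') → Fin n) (Fin (k + k') → Fin n) ℂ :=
  fun i i' => A (splitEquiv k k' n i).1 (splitEquiv k k' n i').1
    * B (splitEquiv k k' n i).2 (splitEquiv k k' n i').2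

section aux
variable {K : Type*} {n : ℕ} (ψ : K → EuclideanSpace ℂ (Fin n))

lemma psi_dot (hψ : ∀ θ : K, ‖ψ θ‖ = 1) (θ : K) :
    ∑ x : Fin n, conj (ψ θ x) * ψ θ x = 1 := by
  have h : (inner ℂ (ψ θ) (ψ θ) : ℂ) = (‖ψ θ‖ : ℂ) ^ 2 := by
    exact_mod_cast inner_self_eq_norm_sq_to_K (𝕜 := ℂ) (ψ θ)
  rw [hψ θ] at h
  simp only [PiLp.inner_apply, RCLike.inner_apply, Complex.ofReal_one, one_pow] at h
  rw [← h]
  exact Finset.sum_congr rfl fun x _ => mul_comm _ _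

lemma tensorPow_dot (hψ : ∀ θ : K, ‖ψ θ‖ = 1) (k : ℕ) (θ : K) :
    star (tensorPow ψ k θ) ⬝ᵥ tensorPow ψ k θ = 1 := by
  have : ∀ i : Fin k → Fin n,
      star (tensorPow ψ k θ i) * tensorPow ψ k θ i
        = ∏ j : Fin k, (conj (ψ θ (i j)) * ψ θ (i j)) := by
    intro i
    simp [tensorPow, Finset.prod_mul_distrib]
  rw [dotProduct]
  simp only [Pi.star_apply, this]
  rw [← Fintype.prod_sum (fun (_ : Fin k) (x : Fin n) => conj (ψ θ x) * ψ θ x)]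
  simp [psi_dot ψ hψ θ]

lemma tensorPow_split (k k' : ℕ) (θ : K) (i : Fin (k + k') → Fin n) :
    tensorPow ψ (k + k') θ i
      = tensorPow ψ k θ (splitEquiv k k' n i).1 * tensorPow ψ k' θ (splitEquiv k k' n i).2 := by
  unfold tensorPow
  rw [← Equiv.prod_comp finSumFinEquiv (fun j => ψ θ (i j)), Fintype.prod_sum_type]
  rfl

lemma tmat_herm {k k' : ℕ} {A : Matrix (Fin k → Fin n) (Fin k → Fin n) ℂ}
    {B : Matrix (Fin k' → Fin n) (Fin k' → Fin n) ℂ}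
    (hA : Aᴴ = A) (hB : Bᴴ = B) : (tmat n A B)ᴴ = tmat n A B := by
  ext i i'
  have hA' := congrFun (congrFun hA (splitEquiv k k' n i).1) (splitEquiv k k' n i').1
  have hB' := congrFun (congrFun hB (splitEquiv k k' n i).2) (splitEquiv k k' n i').2
  simp only [conjTranspose_apply] at hA' hB'
  simp [tmat, conjTranspose_apply, ← hA', ← hB']

lemma tmat_expect {k k' : ℕ} (A : Matrix (Fin k → Fin n) (Fin k → Fin n) ℂ)
    (B : Matrix (Fin k' → Fin n) (Fin k' → Fin n) ℂ) (θ : K) :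
    star (tensorPow ψ (k + k') θ) ⬝ᵥ (tmat n A B).mulVec (tensorPow ψ (k + k') θ)
      = (star (tensorPow ψ k θ) ⬝ᵥ A.mulVec (tensorPow ψ k θ))
        * (star (tensorPow ψ k' θ) ⬝ᵥ B.mulVec (tensorPow ψ k' θ)) := by
  set u := tensorPow ψ k θ with hu
  set v := tensorPow ψ k' θ with hv
  set e := splitEquiv k k' n with he
  have hw : ∀ i, tensorPow ψ (k + k') θ i = u (e i).1 * v (e i).2 := tensorPow_split ψ k k' θ
  set G : ((Fin k → Fin n) × (Fin k' → Fin n)) → ((Fin k → Fin n) × (Fin k' → Fin n)) → ℂ :=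
    fun p q => star (u p.1 * v p.2) * (A p.1 q.1 * B p.2 q.2 * (u q.1 * v q.2)) with hG
  have lhs_eq : star (tensorPow ψ (k + k') θ) ⬝ᵥ (tmat n A B).mulVec (tensorPow ψ (k + k') θ)
      = ∑ p, ∑ q, G p q := by
    simp only [dotProduct, mulVec, Pi.star_apply, hw, tmat, Finset.mul_sum]
    have h1 : ∀ i, (∑ i', star (u (e i).1 * v (e i).2)
        * (A (e i).1 (e i').1 * B (e i).2 (e i').2 * (u (e i').1 * v (e i').2)))
        = ∑ q, G (e i) q := fun i => Equiv.sum_comp e (G (e i))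
    exact (Finset.sum_congr rfl fun i _ => h1 i).trans (Equiv.sum_comp e (fun p => ∑ q, G p q))
  rw [lhs_eq]
  have key : ∀ p : (Fin k → Fin n) × (Fin k' → Fin n), ∑ q, G p q
      = (star (u p.1) * ∑ q1, A p.1 q1 * u q1) * (star (v p.2) * ∑ q2, B p.2 q2 * v q2) := by
    intro p
    rw [Fintype.sum_prod_type]
    have : (star (u p.1) * ∑ q1, A p.1 q1 * u q1) * (star (v p.2) * ∑ q2, B p.2 q2 * v q2)
        = star (u p.1) * star (v p.2) * ((∑ q1, A p.1 q1 * u q1) * (∑ q2, B p.2 q2 * v q2)) := by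
      ring
    rw [this, Finset.sum_mul_sum, Finset.mul_sum]
    refine Finset.sum_congr rfl fun q1 _ => ?_
    rw [Finset.mul_sum]
    refine Finset.sum_congr rfl fun q2 _ => ?_
    simp only [hG, star_mul']
    ring
  simp only [key]
  rw [Fintype.sum_prod_type]
  rw [show (star u ⬝ᵥ A *ᵥ u) * (star v ⬝ᵥ B *ᵥ v)
      = (∑ x, star (u x) * ∑ q1, A x q1 * u q1) * (∑ y, star (v y) * ∑ q2, B y q2 * v q2) from rfl]
  rw [Finset.sum_mul_sum]

lemma herm_expect_star {m : Type*} [Fintype m] {A : Matrix m m ℂ} (hA : Aᴴ = A)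
    (w : m → ℂ) : star (star w ⬝ᵥ A.mulVec w) = star w ⬝ᵥ A.mulVec w := by
  calc star (star w ⬝ᵥ A.mulVec w) = star (A.mulVec w) ⬝ᵥ w := by
        rw [star_dotProduct, star_star]
    _ = (star w ᵥ* Aᴴ) ⬝ᵥ w := by rw [star_mulVec]
    _ = star w ⬝ᵥ A.mulVec w := by rw [hA, ← dotProduct_mulVec]

lemma herm_expect_im {m : Type*} [Fintype m] {A : Matrix m m ℂ} (hA : Aᴴ = A)
    (w : m → ℂ) : (star w ⬝ᵥ A.mulVec w).im = 0 := by
  have h := herm_expect_star hA w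
  have : (starRingEnd ℂ) (star w ⬝ᵥ A.mulVec w) = star w ⬝ᵥ A.mulVec w := h
  exact Complex.conj_eq_iff_im.mp this
end aux

/-- Part 1 of Lemma 1: the family of QNode expectation functions is a unital subalgebra of
the real-valued functions on `K`: it contains all constants and is closed under pointwise
addition, pointwise multiplication (via ancilla coupling), and real scalar multiplication. -/
theorem qnodeFamily_is_unital_subalgebra
    {K : Type*} [TopologicalSpace K] [CompactSpace K] [T2Space K]
    {n : ℕ} (hn : 0 < n) (ψ : K → EuclideanSpace ℂ (Fin n))
    (hψ_cont : Continuous ψ) (hψ_norm : ∀ θ : K, ‖ψ θ‖ = 1) :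
    (∀ c : ℝ, (fun _ : K => c) ∈ QNodeFamily ψ) ∧
    (∀ f g : K → ℝ, f ∈ QNodeFamily ψ → g ∈ QNodeFamily ψ → f + g ∈ QNodeFamily ψ) ∧
    (∀ f g : K → ℝ, f ∈ QNodeFamily ψ → g ∈ QNodeFamily ψ → f * g ∈ QNodeFamily ψ) ∧
    (∀ (c : ℝ) (f : K → ℝ), f ∈ QNodeFamily ψ → c • f ∈ QNodeFamily ψ) := by
  refine ⟨?_, ?_, ?_, ?_⟩
  · -- constants
    intro c
    refine ⟨0, Matrix.of fun _ _ => (c : ℂ), ?_, ?_⟩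
    · ext i j
      simp [Matrix.conjTranspose_apply, Complex.conj_ofReal]
    · intro θ
      have hT : tensorPow ψ 0 θ = fun _ => 1 := by
        funext i; simp [tensorPow]
      simp [dotProduct, mulVec, hT, Fintype.sum_unique]
  · -- addition
    rintro f g ⟨k, A, hA, hfA⟩ ⟨k', B, hB, hgB⟩
    refine ⟨k + k', tmat n A 1 + tmat n 1 B, ?_, ?_⟩
    · rw [Matrix.conjTranspose_add, tmat_herm hA Matrix.conjTranspose_one,
        tmat_herm Matrix.conjTranspose_one hB]
    · intro θ
      rw [Matrix.add_mulVec, dotProduct_add, Complex.add_re, tmat_expect, tmat_expect,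
        Matrix.one_mulVec, Matrix.one_mulVec, tensorPow_dot ψ hψ_norm, tensorPow_dot ψ hψ_norm,
        mul_one, one_mul, Pi.add_apply, hfA θ, hgB θ]
  · -- multiplication
    rintro f g ⟨k, A, hA, hfA⟩ ⟨k', B, hB, hgB⟩
    refine ⟨k + k', tmat n A B, tmat_herm hA hB, ?_⟩
    intro θ
    rw [tmat_expect, Complex.mul_re, herm_expect_im hA, herm_expect_im hB]
    simp [Pi.mul_apply, hfA θ, hgB θ]
  · -- scalar multiplication
    rintro c f ⟨k, A, hA, hfA⟩
    refine ⟨k, (c : ℂ) • A, ?_, ?_⟩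
    · rw [Matrix.conjTranspose_smul, hA]
      congr 1
      simp [Complex.conj_ofReal]
    · intro θ
      rw [Matrix.smul_mulVec, dotProduct_smul]
      simp [Pi.smul_apply, hfA θ]
end

section
/- Let K ⊆ ℝ be a compact set, let μ be a finite Borel measure on K, let 1 ≤ p < ∞, and let σ : ℝ → ℝ be a continuous bounded function which is not a polynomial (there is no polynomial P ∈ ℝ[X] with σ x = P.eval x for all x ∈ ℝ). Then the set of one-hidden-layer neural network functions, i.e. functions of the form x ↦ ∑_{i=1}^{m} c_i · σ (w_i * x + b_i) for some m ∈ ℕ and c, w, b ∈ ℝ^m, is dense in L^p(μ; ℝ): for every g ∈ L^p(μ; ℝ) and ε > 0 there exist such parameters with ‖∑_{i=1}^{m} c_i · σ (w_i * · + b_i) − g‖_{L^p(μ)} ≤ ε. -/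
open MeasureTheory Filter Set Convolution ContinuousLinearMap Polynomial
open scoped ENNReal BigOperators Topology BoundedContinuousFunction



lemma exists_antideriv_poly (P : Polynomial ℝ) : ∃ Q : Polynomial ℝ, Q.derivative = P := by
  induction P using Polynomial.induction_on' with
  | add p q hp hq =>
    obtain ⟨Qp, hQp⟩ := hp; obtain ⟨Qq, hQq⟩ := hq
    exact ⟨Qp + Qq, by rw [derivative_add, hQp, hQq]⟩
  | monomial n a =>
    refine ⟨Polynomial.monomial (n+1) (a / (n+1)), ?_⟩
    rw [derivative_monomial]
    simp only [Nat.add_sub_cancel, Nat.cast_add, Nat.cast_one]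
    congr 1
    have : ((n:ℝ) + 1) ≠ 0 := by positivity
    field_simp

lemma isPoly_of_iteratedDeriv_eq_zero (k : ℕ) :
    ∀ (f : ℝ → ℝ), ContDiff ℝ (⊤ : ℕ∞) f → (∀ x, iteratedDeriv k f x = 0) →
      ∃ P : Polynomial ℝ, ∀ x, f x = P.eval x := by
  induction k with
  | zero =>
    intro f _ h
    exact ⟨0, fun x => by simpa [iteratedDeriv_zero] using h x⟩
  | succ n ih =>
    intro f hf h
    have hd : ContDiff ℝ (⊤ : ℕ∞) (deriv f) := (contDiff_infty_iff_deriv.mp hf).2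
    have h' : ∀ x, iteratedDeriv n (deriv f) x = 0 := by
      intro x
      have := h x
      rwa [iteratedDeriv_succ'] at this
    obtain ⟨P, hP⟩ := ih (deriv f) hd h'
    obtain ⟨Q, hQ⟩ := exists_antideriv_poly P
    refine ⟨Q + Polynomial.C (f 0 - Q.eval 0), fun x => ?_⟩
    have key : ∀ y, f y - Q.eval y = f 0 - Q.eval 0 := by
      have hdiff : Differentiable ℝ (fun y => f y - Q.eval y) :=
        (hf.differentiable (by simp)).sub Q.differentiable
      have hzero : ∀ y, deriv (fun y => f y - Q.eval y) y = 0 := by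
        intro y
        have h1 : HasDerivAt (fun y => f y - Q.eval y) (deriv f y - Q.derivative.eval y) y :=
          ((hf.differentiable (by simp) y).hasDerivAt).sub (Q.hasDerivAt y)
        rw [h1.deriv, hQ, ← hP y]
        ring
      exact fun y => is_const_of_deriv_eq_zero hdiff hzero y 0
    have := key x
    simp only [Polynomial.eval_add, Polynomial.eval_C]
    linarith

/-- A bounded smooth function on `ℝ` with some identically-vanishing iterated derivative
is constant. -/
lemma const_of_bounded_iteratedDeriv_zero (f : ℝ → ℝ) (hf : ContDiff ℝ (⊤ : ℕ∞) f)
    {C : ℝ} (hbd : ∀ x, |f x| ≤ C) (k : ℕ) (hk : ∀ x, iteratedDeriv k f x = 0) :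
    ∀ x y, f x = f y := by
  obtain ⟨P, hP⟩ := isPoly_of_iteratedDeriv_eq_zero k f hf hk
  have hdeg : ¬ (0 < P.degree) := by
    intro hd
    obtain ⟨x, hx⟩ := (Polynomial.abs_tendsto_atTop P hd).eventually_gt_atTop C |>.exists
    exact absurd (hP x ▸ hbd x) (by linarith)
  have ha := Polynomial.degree_le_zero_iff.mp (le_of_not_gt hdeg)
  intro x y
  rw [hP x, hP y, ha]
  simp



lemma mem_closed_submodule_of_iteratedDeriv
    {K : Set ℝ} [CompactSpace K]
    (W : Submodule ℝ C(K, ℝ)) (hWc : IsClosed (W : Set C(K, ℝ)))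
    (F : ℝ → ℝ) (hF : ContDiff ℝ (⊤ : ℕ∞) F)
    (hmem : ∀ (g : C(K, ℝ)) (w b : ℝ), (∀ x : K, g x = F (w * x + b)) → g ∈ W)
    (k : ℕ) :
    ∀ (g : C(K, ℝ)) (w b : ℝ),
      (∀ x : K, g x = (x : ℝ) ^ k * iteratedDeriv k F (w * x + b)) → g ∈ W := by
  obtain ⟨R, hR0, hR⟩ : ∃ R : ℝ, 0 ≤ R ∧ ∀ x : K, |(x : ℝ)| ≤ R := by
    have hK : IsCompact K := isCompact_iff_compactSpace.mpr inferInstance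
    obtain ⟨r, hr⟩ := hK.isBounded.subset_closedBall 0
    exact ⟨max r 0, le_max_right _ _, fun x => by
      have := hr x.2
      simp only [Metric.mem_closedBall, Real.dist_eq, sub_zero] at this
      exact this.trans (le_max_left _ _)⟩
  induction k with
  | zero =>
    intro g w b hg
    exact hmem g w b (fun x => by simpa using hg x)
  | succ k ih =>
    intro g w b hg
    have hGk : ContDiff ℝ (⊤ : ℕ∞) (iteratedDeriv k F) := by
      rw [iteratedDeriv_eq_iterate]; exact hF.iterate_deriv k
    have hGk1 : Continuous (iteratedDeriv (k+1) F) := by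
      have : ContDiff ℝ (⊤ : ℕ∞) (iteratedDeriv (k+1) F) := by
        rw [iteratedDeriv_eq_iterate]; exact hF.iterate_deriv (k+1)
      exact this.continuous
    have hcont : ∀ w' : ℝ, Continuous fun x : K => (x : ℝ) ^ k * iteratedDeriv k F (w' * x + b) :=
      fun w' => ((continuous_pow k).comp continuous_subtype_val).mul
        (hGk.continuous.comp ((continuous_const.mul continuous_subtype_val).add continuous_const))
    set Ψ : ℝ → C(K, ℝ) := fun w' => ⟨_, hcont w'⟩ with hΨ
    have hΨW : ∀ w', Ψ w' ∈ W := fun w' => ih (Ψ w') w' b (fun x => rfl)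
    have hDer : ∀ y : ℝ, HasDerivAt (iteratedDeriv k F) (iteratedDeriv (k+1) F y) y := by
      intro y
      have h1 := (hGk.differentiable (by simp) y).hasDerivAt
      rwa [← iteratedDeriv_succ] at h1
    set M : ℝ := |w| * R + |b| + R with hM
    have hucG : UniformContinuousOn (iteratedDeriv (k+1) F) (Icc (-M) M) :=
      isCompact_Icc.uniformContinuousOn_of_continuous hGk1.continuousOn
    have htend : Tendsto (fun h : ℝ => h⁻¹ • (Ψ (w + h) - Ψ w)) (𝓝[≠] 0) (𝓝 g) := by
      rw [Metric.tendsto_nhdsWithin_nhds]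
      intro ε hε
      set ε' : ℝ := ε / 2 / (R ^ (k+1) + 1) with hε'
      have hε'pos : 0 < ε' := by positivity
      obtain ⟨δ', hδ'pos, hδ'⟩ := (Metric.uniformContinuousOn_iff).mp hucG ε' hε'pos
      refine ⟨min (δ' / (R + 1)) 1, by positivity, ?_⟩
      intro h hh hdist
      have hne : h ≠ 0 := hh
      rw [Real.dist_eq, sub_zero] at hdist
      have hh1 : |h| ≤ 1 := le_of_lt (lt_of_lt_of_le hdist (min_le_right _ _))
      have hhδ : |h| * (R+1) < δ' := by
        have h1 : |h| < δ' / (R + 1) := lt_of_lt_of_le hdist (min_le_left _ _)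
        have h2 : (0:ℝ) < R + 1 := by linarith
        calc |h| * (R+1) < δ' / (R+1) * (R+1) := mul_lt_mul_of_pos_right h1 h2
          _ = δ' := by field_simp
      rw [dist_eq_norm]
      have hb : ∀ x : K, ‖(h⁻¹ • (Ψ (w + h) - Ψ w) - g) x‖ ≤ ε / 2 := by
        intro x
        have hval : (h⁻¹ • (Ψ (w + h) - Ψ w) - g) x
            = h⁻¹ * ((x:ℝ)^k * iteratedDeriv k F ((w+h) * x + b)
                - (x:ℝ)^k * iteratedDeriv k F (w * x + b))
              - (x:ℝ)^(k+1) * iteratedDeriv (k+1) F (w * x + b) := by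
          simp [hΨ, hg x, smul_eq_mul]
        by_cases hx0 : (x : ℝ) = 0
        · rw [hval, hx0]
          simp [zero_pow (Nat.succ_ne_zero k)]
          positivity
        · set u : ℝ := w * x + b with hu
          set t : ℝ := h * x with ht
          have htne : t ≠ 0 := mul_ne_zero hne hx0
          have huv : (w + h) * (x:ℝ) + b = u + t := by rw [hu, ht]; ring
          have hmvt : ∃ c : ℝ, |c - u| ≤ |t| ∧
              iteratedDeriv k F (u + t) - iteratedDeriv k F u = t * iteratedDeriv (k+1) F c := by
            rcases lt_or_gt_of_ne htne with hneg | hpos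
            · obtain ⟨c, hc, hceq⟩ := exists_hasDerivAt_eq_slope (iteratedDeriv k F)
                (iteratedDeriv (k+1) F) (by linarith : u + t < u)
                (hGk.continuous.continuousOn) (fun y _ => hDer y)
              rw [Set.mem_Ioo] at hc
              have hd : u - (u + t) ≠ 0 := sub_ne_zero.mpr (by intro hq; apply htne; linarith)
              have hceq' := (eq_div_iff hd).mp hceq
              refine ⟨c, ?_, by linear_combination hceq'⟩
              rw [abs_of_neg hneg, abs_le]
              constructor <;> linarith [hc.1, hc.2]
            · obtain ⟨c, hc, hceq⟩ := exists_hasDerivAt_eq_slope (iteratedDeriv k F)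
                (iteratedDeriv (k+1) F) (by linarith : u < u + t)
                (hGk.continuous.continuousOn) (fun y _ => hDer y)
              rw [Set.mem_Ioo] at hc
              have hd : (u + t) - u ≠ 0 := sub_ne_zero.mpr (by intro hq; apply htne; linarith)
              have hceq' := (eq_div_iff hd).mp hceq
              refine ⟨c, ?_, by linear_combination -hceq'⟩
              rw [abs_of_pos hpos, abs_le]
              constructor <;> linarith [hc.1, hc.2]
          obtain ⟨c, hcu, hceq⟩ := hmvt
          have hxR : |(x:ℝ)| ≤ R := hR x
          have htR : |t| ≤ |h| * R := by
            rw [ht, abs_mul]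
            exact mul_le_mul_of_nonneg_left hxR (abs_nonneg h)
          have htR' : |t| ≤ R := by nlinarith [abs_nonneg h]
          have h2 : |u| ≤ |w| * R + |b| := by
            rw [hu]
            calc |w * (x:ℝ) + b| ≤ |w * (x:ℝ)| + |b| := abs_add_le _ _
              _ ≤ |w| * R + |b| := by
                  rw [abs_mul]
                  nlinarith [mul_le_mul_of_nonneg_left hxR (abs_nonneg w)]
          have huM : u ∈ Icc (-M) M := by
            rw [Set.mem_Icc, ← abs_le]
            have : (0:ℝ) ≤ R := hR0
            calc |u| ≤ |w| * R + |b| := h2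
              _ ≤ |w| * R + |b| + R := by linarith
          have hcM : c ∈ Icc (-M) M := by
            rw [Set.mem_Icc, ← abs_le]
            have h1 : |c| ≤ |u| + |c - u| := by
              have := abs_add_le u (c - u)
              simpa [add_sub_cancel] using this
            calc |c| ≤ |u| + |c - u| := h1
              _ ≤ (|w| * R + |b|) + R := by
                  have := hcu.trans htR'
                  linarith
          have hdistcu : dist c u < δ' := by
            rw [Real.dist_eq]
            calc |c - u| ≤ |t| := hcu
              _ ≤ |h| * R := htR
              _ < δ' := lt_of_le_of_lt (by nlinarith [abs_nonneg h]) hhδ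
          have hGdiff : |iteratedDeriv (k+1) F c - iteratedDeriv (k+1) F u| < ε' := by
            have := hδ' c hcM u huM hdistcu
            rwa [Real.dist_eq] at this
          have hval2 : (h⁻¹ • (Ψ (w + h) - Ψ w) - g) x
              = (x:ℝ)^(k+1) * (iteratedDeriv (k+1) F c - iteratedDeriv (k+1) F u) := by
            rw [hval, huv]
            rw [show (x:ℝ)^k * iteratedDeriv k F (u + t) - (x:ℝ)^k * iteratedDeriv k F u
                = (x:ℝ)^k * (iteratedDeriv k F (u + t) - iteratedDeriv k F u) by ring, hceq]
            rw [ht]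
            field_simp
            ring
          rw [Real.norm_eq_abs, hval2, abs_mul, abs_pow]
          calc |(x:ℝ)|^(k+1) * |iteratedDeriv (k+1) F c - iteratedDeriv (k+1) F u|
              ≤ R^(k+1) * ε' :=
                mul_le_mul (pow_le_pow_left₀ (abs_nonneg _) hxR _) (le_of_lt hGdiff)
                  (abs_nonneg _) (by positivity)
            _ ≤ ε / 2 := by
                have hpos : (0:ℝ) < R^(k+1)+1 := by positivity
                rw [hε', mul_comm, div_mul_eq_mul_div, div_le_iff₀ hpos]
                nlinarith [pow_nonneg hR0 (k+1)]
      calc ‖h⁻¹ • (Ψ (w + h) - Ψ w) - g‖ ≤ ε / 2 :=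
            (ContinuousMap.norm_le _ (by positivity)).mpr hb
        _ < ε := by linarith
    exact hWc.mem_of_tendsto htend
      (Filter.eventually_of_mem self_mem_nhdsWithin
        (fun h hh => W.smul_mem _ (W.sub_mem (hΨW (w+h)) (hΨW w))))



/-- The `C(K,ℝ)` function `x ↦ (φ ⋆ σ)(w x + b)` belongs to the closure of the span of the
translates/dilates of `σ`, where `φ` is continuous with support in `[-R, R]`. -/
lemma conv_mem_closure_span
    {K : Set ℝ} [CompactSpace K]
    (σ : ℝ → ℝ) (hσ_cont : Continuous σ)
    (S : Set C(K, ℝ)) (hS : ∀ w b : ℝ, ∀ g : C(K, ℝ), (∀ x : K, g x = σ (w * x + b)) → g ∈ S)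
    (φ : ℝ → ℝ) (hφ_cont : Continuous φ) (R : ℝ)
    (hφ_supp : ∀ y : ℝ, y ∉ Icc (-R) R → φ y = 0)
    (w b : ℝ) (g : C(K, ℝ))
    (hg : ∀ x : K, g x = (φ ⋆[lsmul ℝ ℝ, volume] σ) (w * x + b)) :
    g ∈ (Submodule.span ℝ S).topologicalClosure := by
  classical
  set W := (Submodule.span ℝ S).topologicalClosure with hW
  have hWc : IsClosed (W : Set C(K, ℝ)) := Submodule.isClosed_topologicalClosure _
  haveI : CompleteSpace W := hWc.completeSpace_coe
  -- the integrand as a continuous family of elements of `W`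
  set Γmap : C(ℝ × K, ℝ) :=
    ⟨fun q => φ q.1 * σ (w * q.2 + b - q.1), by
      exact (hφ_cont.comp continuous_fst).mul (hσ_cont.comp (by fun_prop))⟩ with hΓmap
  set Γ : ℝ → C(K, ℝ) := fun y => Γmap.curry y with hΓ
  have hΓcont : Continuous Γ := Γmap.curry.continuous
  have hΓW : ∀ y : ℝ, Γ y ∈ W := by
    intro y
    have h1 : (⟨fun x : K => σ (w * x + (b - y)), by fun_prop⟩ : C(K, ℝ)) ∈ S :=
      hS w (b - y) _ (fun x => rfl)
    have h2 : Γ y = φ y • (⟨fun x : K => σ (w * x + (b - y)), by fun_prop⟩ : C(K, ℝ)) := by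
      ext x
      show φ y * σ (w * x + b - y) = φ y * σ (w * x + (b - y))
      have harg : w * (x:ℝ) + b - y = w * x + (b - y) := by ring
      rw [harg]
    rw [h2]
    exact Submodule.smul_mem _ _ (Submodule.le_topologicalClosure _ (Submodule.subset_span h1))
  set ν : Measure ℝ := volume.restrict (Icc (-R) R) with hν
  set Γ' : ℝ → W := fun y => ⟨Γ y, hΓW y⟩ with hΓ'
  have hΓ'cont : Continuous Γ' := hΓcont.subtype_mk _
  have hΓ'int : Integrable Γ' ν := by
    rw [hν]
    exact hΓ'cont.integrableOn_Icc
  have hΓint : Integrable Γ ν := by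
    have := (Submodule.subtypeL W).integrable_comp (𝕜 := ℝ) hΓ'int
    simpa [Function.comp] using this
  have hkey : ∫ y, Γ y ∂ν ∈ W := by
    have := ContinuousLinearMap.integral_comp_comm (𝕜 := ℝ) (Submodule.subtypeL W) hΓ'int
    have h2 : (fun y => (Submodule.subtypeL W) (Γ' y)) = Γ := rfl
    rw [h2] at this
    rw [this]
    exact Subtype.coe_prop _
  have hgoal : g = ∫ y, Γ y ∂ν := by
    ext x
    rw [ContinuousMap.integral_apply hΓint]
    have h3 : ∀ y : ℝ, Γ y x = φ y * σ (w * x + b - y) := fun y => rfl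
    simp only [h3]
    rw [hg x, hν]
    rw [MeasureTheory.setIntegral_eq_integral_of_forall_compl_eq_zero
      (fun y hy => by rw [hφ_supp y hy, zero_mul])]
    rw [convolution_def]
    simp [ContinuousLinearMap.lsmul_apply, smul_eq_mul]
  rw [hgoal]
  exact hkey

lemma nn_span_dense {K : Set ℝ} [CompactSpace K]
    (σ : ℝ → ℝ) (hσ_cont : Continuous σ) (hσ_bdd : ∃ C : ℝ, ∀ x : ℝ, |σ x| ≤ C)
    (hσ_nonpoly : ¬ ∃ P : Polynomial ℝ, ∀ x : ℝ, σ x = P.eval x) (f : C(K, ℝ)) :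
    f ∈ (Submodule.span ℝ
      {h : C(K, ℝ) | ∃ w b : ℝ, ∀ x : K, h x = σ (w * x + b)}).topologicalClosure := by
  classical
  obtain ⟨C, hC⟩ := hσ_bdd
  set S : Set C(K, ℝ) := {h : C(K, ℝ) | ∃ w b : ℝ, ∀ x : K, h x = σ (w * x + b)} with hSdef
  set W := (Submodule.span ℝ S).topologicalClosure with hWdef
  have hWc : IsClosed (W : Set C(K, ℝ)) := Submodule.isClosed_topologicalClosure _
  have hS : ∀ w b : ℝ, ∀ g : C(K, ℝ), (∀ x : K, g x = σ (w * x + b)) → g ∈ S :=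
    fun w b g hgx => ⟨w, b, hgx⟩
  -- convolutions with bump functions
  set F : ContDiffBump (0:ℝ) → ℝ → ℝ :=
    fun φ => (φ.normed volume ⋆[lsmul ℝ ℝ, volume] σ) with hFdef
  have hφsupp : ∀ φ : ContDiffBump (0:ℝ), ∀ y : ℝ,
      y ∉ Icc (-φ.rOut) φ.rOut → φ.normed volume y = 0 := by
    intro φ y hy
    have h := φ.support_normed_eq (μ := volume)
    by_contra hne
    have h2 : y ∈ Function.support (φ.normed volume) := hne
    rw [h] at h2
    simp only [Metric.mem_ball, Real.dist_eq, sub_zero, Set.mem_Icc] at h2 hy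
    rw [abs_lt] at h2
    push_neg at hy
    rcases le_or_gt (-φ.rOut) y with h1 | h1
    · linarith [hy h1]
    · linarith
  have hconv_mem : ∀ (φ : ContDiffBump (0:ℝ)) (w b : ℝ) (g : C(K, ℝ)),
      (∀ x : K, g x = F φ (w * x + b)) → g ∈ W :=
    fun φ w b g hg => conv_mem_closure_span σ hσ_cont S hS (φ.normed volume)
      φ.continuous_normed φ.rOut (hφsupp φ) w b g hg
  have hFsm : ∀ φ : ContDiffBump (0:ℝ), ContDiff ℝ (⊤:ℕ∞) (F φ) :=
    fun φ => HasCompactSupport.contDiff_convolution_left _ φ.hasCompactSupport_normed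
      φ.contDiff_normed (hσ_cont.locallyIntegrable)
  have hFbd : ∀ (φ : ContDiffBump (0:ℝ)) (z : ℝ), |F φ z| ≤ C := by
    intro φ z
    rw [hFdef]
    simp only []
    rw [convolution_def]
    simp only [lsmul_apply, smul_eq_mul]
    have hint : Integrable (fun t => φ.normed volume t * σ (z - t)) volume :=
      ((φ.continuous_normed).mul (hσ_cont.comp (by fun_prop))).integrable_of_hasCompactSupport
        (φ.hasCompactSupport_normed.mul_right)
    calc |∫ t, φ.normed volume t * σ (z - t)| ≤ ∫ t, ‖φ.normed volume t * σ (z - t)‖ :=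
          norm_integral_le_integral_norm (fun t => φ.normed volume t * σ (z - t))
      _ ≤ ∫ t, φ.normed volume t * C := by
          apply integral_mono hint.norm ((φ.integrable_normed).mul_const C)
          intro t
          simp only [Real.norm_eq_abs]
          rw [abs_mul, abs_of_nonneg (φ.nonneg_normed t)]
          exact mul_le_mul_of_nonneg_left (hC _) (φ.nonneg_normed t)
      _ = C := by rw [integral_mul_const, φ.integral_normed, one_mul]
  -- a point where σ is nonzero
  have hσne : ∃ b0 : ℝ, σ b0 ≠ 0 := by
    by_contra h
    push_neg at h
    exact hσ_nonpoly ⟨0, fun x => by simp [h x]⟩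
  -- monomials are in W
  have hmono : ∀ k : ℕ, ∀ g : C(K, ℝ), (∀ x : K, g x = (x:ℝ)^k) → g ∈ W := by
    intro k
    rcases Nat.eq_zero_or_pos k with rfl | hk
    · intro g hg
      obtain ⟨b0, hb0⟩ := hσne
      have h1 : (⟨fun x : K => σ ((0:ℝ) * x + b0), by fun_prop⟩ : C(K, ℝ)) ∈ S :=
        hS 0 b0 _ (fun x => rfl)
      have h2 : g = (σ b0)⁻¹ • (⟨fun x : K => σ ((0:ℝ) * x + b0), by fun_prop⟩ : C(K, ℝ)) := by
        ext x
        simp [hg x, inv_mul_cancel₀ hb0]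
      rw [h2]
      exact Submodule.smul_mem _ _ (Submodule.le_topologicalClosure _ (Submodule.subset_span h1))
    · -- find a bump and a point with nonvanishing k-th derivative
      have hex : ∃ (φ : ContDiffBump (0:ℝ)) (b : ℝ), iteratedDeriv k (F φ) b ≠ 0 := by
        by_contra h
        push_neg at h
        -- then every convolution is constant, so σ is constant
        have hconst : ∀ (φ : ContDiffBump (0:ℝ)) (x y : ℝ), F φ x = F φ y :=
          fun φ => const_of_bounded_iteratedDeriv_zero (F φ) (hFsm φ) (hFbd φ) k (h φ)
        set φi : ℕ → ContDiffBump (0:ℝ) :=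
          fun i => ⟨((i:ℝ)+1)⁻¹/2, ((i:ℝ)+1)⁻¹, by positivity, by
            have : (0:ℝ) < ((i:ℝ)+1)⁻¹ := by positivity
            linarith⟩ with hφi
        have hrOut : Tendsto (fun i : ℕ => (φi i).rOut) atTop (𝓝 0) := by
          simp only [hφi]
          exact tendsto_one_div_add_atTop_nhds_zero_nat.congr (by intro n; rw [one_div])
        have htendF : ∀ x : ℝ, Tendsto (fun i => F (φi i) x) atTop (𝓝 (σ x)) :=
          fun x => ContDiffBump.convolution_tendsto_right_of_continuous hrOut hσ_cont x
        have hσconst : ∀ x y : ℝ, σ x = σ y := by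
          intro x y
          have h1 : Tendsto (fun i => F (φi i) x) atTop (𝓝 (σ y)) :=
            (htendF y).congr (fun i => hconst (φi i) y x)
          exact tendsto_nhds_unique (htendF x) h1
        exact hσ_nonpoly ⟨Polynomial.C (σ 0), fun x => by simp [hσconst x 0]⟩
      obtain ⟨φ, b, hDk⟩ := hex
      intro g hg
      set D := iteratedDeriv k (F φ) b with hD
      have h1 : (⟨fun x : K => (x:ℝ)^k * iteratedDeriv k (F φ) ((0:ℝ) * x + b), by
          have hcc : Continuous (iteratedDeriv k (F φ)) := by
            have : ContDiff ℝ (⊤:ℕ∞) (iteratedDeriv k (F φ)) := by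
              rw [iteratedDeriv_eq_iterate]; exact (hFsm φ).iterate_deriv k
            exact this.continuous
          fun_prop⟩ : C(K, ℝ)) ∈ W :=
        mem_closed_submodule_of_iteratedDeriv W hWc (F φ) (hFsm φ)
          (fun g w b hg => hconv_mem φ w b g hg) k _ 0 b (fun x => rfl)
      have h2 : g = D⁻¹ • (⟨fun x : K => (x:ℝ)^k * iteratedDeriv k (F φ) ((0:ℝ) * x + b), by
          have hcc : Continuous (iteratedDeriv k (F φ)) := by
            have : ContDiff ℝ (⊤:ℕ∞) (iteratedDeriv k (F φ)) := by
              rw [iteratedDeriv_eq_iterate]; exact (hFsm φ).iterate_deriv k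
            exact this.continuous
          fun_prop⟩ : C(K, ℝ)) := by
        ext x
        simp only [ContinuousMap.smul_apply, ContinuousMap.coe_mk, smul_eq_mul, hg x,
          zero_mul, zero_add, ← hD]
        field_simp
      rw [h2]
      exact Submodule.smul_mem _ _ h1
  -- polynomial functions are in W
  have hpoly : (polynomialFunctions K : Set C(K, ℝ)) ⊆ (W : Set C(K, ℝ)) := by
    intro q hq
    rw [polynomialFunctions_coe] at hq
    obtain ⟨p, rfl⟩ := hq
    have hrepr : (Polynomial.toContinuousMapOnAlgHom K) p
        = ∑ i ∈ Finset.range (p.natDegree + 1), p.coeff i •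
            (⟨fun x : K => (x:ℝ)^i, by fun_prop⟩ : C(K, ℝ)) := by
      ext x
      simp only [Polynomial.toContinuousMapOnAlgHom_apply, Polynomial.toContinuousMapOn_apply,
        Polynomial.toContinuousMap_apply, ContinuousMap.coe_sum, Finset.sum_apply,
        ContinuousMap.smul_apply, ContinuousMap.coe_mk, smul_eq_mul]
      exact Polynomial.eval_eq_sum_range (p := p) (x := (x:ℝ))
    rw [hrepr]
    exact Submodule.sum_mem _ (fun i _ => Submodule.smul_mem _ _ (hmono i _ (fun x => rfl)))
  -- Stone–Weierstrass
  have hf : f ∈ closure (polynomialFunctions K : Set C(K, ℝ)) :=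
    ContinuousMap.continuousMap_mem_subalgebra_closure_of_separatesPoints _
      (polynomialFunctions_separatesPoints K) f
  have hf2 : f ∈ closure (W : Set C(K, ℝ)) := closure_mono hpoly hf
  rwa [hWc.closure_eq] at hf2

/-- Lemma 2 (classical universal approximation, after Cybenko/Hornik/Leshno et al.):
one-hidden-layer neural network functions `x ↦ ∑ i, c i * σ (w i * x + b i)` with a continuous,
bounded, non-polynomial activation `σ` are dense in `L^p(μ; ℝ)` on a compact set `K ⊆ ℝ`
equipped with a finite Borel measure `μ`, for `1 ≤ p < ∞`. -/
theorem mlp_universal_approximation_Lp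
    (K : Set ℝ) (hK : IsCompact K)
    (μ : Measure K) [IsFiniteMeasure μ]
    (p : ℝ≥0∞) (hp : 1 ≤ p) (hp' : p ≠ ∞)
    (σ : ℝ → ℝ) (hσ_cont : Continuous σ) (hσ_bdd : ∃ C : ℝ, ∀ x : ℝ, |σ x| ≤ C)
    (hσ_nonpoly : ¬ ∃ P : Polynomial ℝ, ∀ x : ℝ, σ x = P.eval x)
    (g : K → ℝ) (hg : MemLp g p μ) (ε : ℝ) (hε : 0 < ε) :
    ∃ (m : ℕ) (c w b : Fin m → ℝ),
      eLpNorm (fun x : K => (∑ i : Fin m, c i * σ (w i * (x : ℝ) + b i)) - g x) p μ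
        ≤ ENNReal.ofReal ε := by
  classical
  haveI : CompactSpace K := isCompact_iff_compactSpace.mp hK
  -- approximate by a bounded continuous function within ε/2
  obtain ⟨g₀, hg₀, -⟩ := hg.exists_boundedContinuous_eLpNorm_sub_le (ε := ENNReal.ofReal (ε/2)) hp'
    ((ENNReal.ofReal_pos.mpr (by linarith)).ne')
  set f₀ : C(K, ℝ) := g₀.toContinuousMap with hf₀def
  -- the measure-dependent constant
  set B : ℝ≥0∞ := μ univ ^ p.toReal⁻¹ with hB
  have hBne : B ≠ ∞ := by
    rw [hB]
    exact (ENNReal.rpow_lt_top_of_nonneg (by positivity) (measure_ne_top μ _)).ne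
  set δ : ℝ := (ε/2) / (B.toReal + 1) with hδdef
  have hδpos : 0 < δ := by
    have := ENNReal.toReal_nonneg (a := B)
    positivity
  -- density of the span of neural functions in C(K,ℝ)
  have hf₀mem := nn_span_dense σ hσ_cont hσ_bdd hσ_nonpoly f₀
  rw [← SetLike.mem_coe, Submodule.topologicalClosure_coe] at hf₀mem
  obtain ⟨v, hvmem, hvdist⟩ := Metric.mem_closure_iff.mp hf₀mem δ hδpos
  rw [SetLike.mem_coe] at hvmem
  obtain ⟨m, c, gs, hsum⟩ := Submodule.mem_span_set'.mp hvmem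
  choose w b hwb using fun i => (gs i).2
  refine ⟨m, c, w, b, ?_⟩
  have hNNv : ∀ x : K, (∑ i : Fin m, c i * σ (w i * (x : ℝ) + b i)) = v x := by
    intro x
    rw [← hsum]
    rw [ContinuousMap.coe_sum, Finset.sum_apply]
    congr 1
    ext i
    rw [ContinuousMap.smul_apply, smul_eq_mul, hwb i x]
  -- split into two parts
  have hmeas1 : AEStronglyMeasurable
      (fun x : K => (∑ i : Fin m, c i * σ (w i * (x : ℝ) + b i)) - f₀ x) μ := by
    apply Continuous.aestronglyMeasurable
    apply Continuous.sub _ f₀.continuous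
    exact continuous_finset_sum _ (fun i _ => by fun_prop)
  have hmeas2 : AEStronglyMeasurable (fun x : K => f₀ x - g x) μ :=
    (f₀.continuous.aestronglyMeasurable).sub hg.aestronglyMeasurable
  have hsplit : (fun x : K => (∑ i : Fin m, c i * σ (w i * (x : ℝ) + b i)) - g x)
      = (fun x : K => (∑ i : Fin m, c i * σ (w i * (x : ℝ) + b i)) - f₀ x)
        + (fun x : K => f₀ x - g x) := by
    funext x; simp only [Pi.add_apply]; ring
  have h1 : eLpNorm (fun x : K => (∑ i : Fin m, c i * σ (w i * (x : ℝ) + b i)) - f₀ x) p μ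
      ≤ ENNReal.ofReal (ε/2) := by
    have hbd : ∀ᵐ (x : K) ∂μ, ‖(∑ i : Fin m, c i * σ (w i * (x : ℝ) + b i)) - f₀ x‖ ≤ δ := by
      filter_upwards with x
      rw [hNNv x]
      have h2 : |v x - f₀ x| ≤ ‖v - f₀‖ := by
        have := ContinuousMap.norm_coe_le_norm (v - f₀) x
        simpa [Real.norm_eq_abs] using this
      have h3 : ‖v - f₀‖ = dist f₀ v := by rw [dist_comm, dist_eq_norm]
      rw [Real.norm_eq_abs]
      calc |v x - f₀ x| ≤ dist f₀ v := by rw [← h3]; exact h2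
        _ ≤ δ := le_of_lt hvdist
    calc eLpNorm _ p μ ≤ B * ENNReal.ofReal δ := eLpNorm_le_of_ae_bound hbd
      _ = ENNReal.ofReal (B.toReal * δ) := by
          rw [ENNReal.ofReal_mul ENNReal.toReal_nonneg, ENNReal.ofReal_toReal hBne]
      _ ≤ ENNReal.ofReal (ε/2) := by
          apply ENNReal.ofReal_le_ofReal
          rw [hδdef]
          have h4 : (0:ℝ) ≤ B.toReal := ENNReal.toReal_nonneg
          rw [div_eq_mul_inv, ← mul_assoc]
          have h5 : B.toReal * (ε/2) ≤ (B.toReal + 1) * (ε/2) := by nlinarith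
          calc B.toReal * (ε/2) * (B.toReal+1)⁻¹ ≤ (B.toReal+1) * (ε/2) * (B.toReal+1)⁻¹ := by
                apply mul_le_mul_of_nonneg_right h5 (by positivity)
            _ = ε/2 := by field_simp
  have h2 : eLpNorm (fun x : K => f₀ x - g x) p μ ≤ ENNReal.ofReal (ε/2) := by
    have : (fun x : K => f₀ x - g x) = (⇑g₀ - g) := by funext x; simp [hf₀def]
    rw [this, ← eLpNorm_neg]
    simpa [neg_sub] using hg₀
  calc eLpNorm (fun x : K => (∑ i : Fin m, c i * σ (w i * (x : ℝ) + b i)) - g x) p μ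
      ≤ eLpNorm (fun x : K => (∑ i : Fin m, c i * σ (w i * (x : ℝ) + b i)) - f₀ x) p μ
        + eLpNorm (fun x : K => f₀ x - g x) p μ := by
        rw [hsplit]
        exact eLpNorm_add_le hmeas1 hmeas2 hp
    _ ≤ ENNReal.ofReal (ε/2) + ENNReal.ofReal (ε/2) := add_le_add h1 h2
    _ = ENNReal.ofReal ε := by
        rw [← ENNReal.ofReal_add (by positivity) (by positivity)]
        norm_num
end

section
/- Let T > 0 and let μ be the Lebesgue measure restricted to the interval K = [0, T] ⊆ ℝ. Let p, q₁, q₂, q₃ ∈ [1, ∞) satisfy 1/p = 1/q₁ + 1/q₂ + 1/q₃, let m be a positive integer, and let C_CQ, C_C, C_grad be positive reals. Suppose u, v : K → ℝ are measurable with ‖u‖_{L^{q₁}(μ)} ≤ C_CQ / m and ‖v‖_{L^{q₂}(μ)} ≤ C_C, and suppose w : K → ℝ^m is measurable with |w_i(t)| ≤ C_grad for μ-almost every t ∈ K and every i ∈ {1, …, m}. Then the function G(t) = 2 · |u(t)| · |v(t)| · ‖w(t)‖₂ (with ‖·‖₂ the Euclidean norm on ℝ^m) satisfies ‖G‖_{L^p(μ)}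 ≤ 2 · C_C · C_grad · T^{1/q₃} · C_CQ / √m. -/
open MeasureTheory
open scoped ENNReal BigOperators

/-- Corollary 1 (mitigation of barren plateaus, eqs. 66–77), abstracted: on `K = [0, T]` with
Lebesgue measure, if the residual `u` has `L^{q₁}`-norm at most `C_CQ/m`, the classical factor
`v` has `L^{q₂}`-norm at most `C_C`, and each of the `m` components of the quantum gradient `w`
is a.e. bounded by `C_grad`, then the pointwise gradient magnitude
`G(t) = 2|u(t)||v(t)|‖w(t)‖₂` satisfies the `O(1/√m)` bound
`‖G‖_{L^p} ≤ 2 C_C C_grad T^{1/q₃} C_CQ / √m`. -/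
theorem barren_plateau_mitigation_gradient_bound
    (T : ℝ) (hT : 0 < T)
    (p q₁ q₂ q₃ : ℝ≥0∞)
    (hp : 1 ≤ p) (hq₁ : 1 ≤ q₁) (hq₂ : 1 ≤ q₂) (hq₃ : 1 ≤ q₃)
    (hp' : p ≠ ∞) (hq₁' : q₁ ≠ ∞) (hq₂' : q₂ ≠ ∞) (hq₃' : q₃ ≠ ∞)
    (hpq : 1 / p = 1 / q₁ + 1 / q₂ + 1 / q₃)
    (m : ℕ) (hm : 0 < m)
    (C_CQ C_C C_grad : ℝ) (hCQ : 0 < C_CQ) (hC : 0 < C_C) (hgrad : 0 < C_grad)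
    (u v : ℝ → ℝ) (w : ℝ → EuclideanSpace ℝ (Fin m))
    (hu_meas : AEStronglyMeasurable u (volume.restrict (Set.Icc (0 : ℝ) T)))
    (hv_meas : AEStronglyMeasurable v (volume.restrict (Set.Icc (0 : ℝ) T)))
    (hw_meas : AEStronglyMeasurable w (volume.restrict (Set.Icc (0 : ℝ) T)))
    (hu : eLpNorm u q₁ (volume.restrict (Set.Icc (0 : ℝ) T)) ≤ ENNReal.ofReal (C_CQ / m))
    (hv : eLpNorm v q₂ (volume.restrict (Set.Icc (0 : ℝ) T)) ≤ ENNReal.ofReal C_C)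
    (hw : ∀ᵐ t ∂(volume.restrict (Set.Icc (0 : ℝ) T)), ∀ i : Fin m, |w t i| ≤ C_grad) :
    eLpNorm (fun t => 2 * |u t| * |v t| * ‖w t‖) p (volume.restrict (Set.Icc (0 : ℝ) T))
      ≤ ENNReal.ofReal (2 * C_C * C_grad * T ^ (1 / q₃.toReal) * C_CQ / Real.sqrt m) := by
  set μ := volume.restrict (Set.Icc (0 : ℝ) T) with hμ
  have hμuniv : μ Set.univ = ENNReal.ofReal T := by
    rw [hμ, Measure.restrict_apply_univ, Real.volume_Icc, sub_zero]
  have hsqm : (0:ℝ) < Real.sqrt m := Real.sqrt_pos.mpr (by exact_mod_cast hm)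
  -- bound on ‖w t‖
  have hwnorm : ∀ᵐ t ∂μ, ‖(fun s => ‖w s‖) t‖ ≤ C_grad * Real.sqrt m := by
    filter_upwards [hw] with t ht
    have h1 : ‖w t‖ ≤ Real.sqrt (∑ i : Fin m, C_grad ^ 2) := by
      rw [EuclideanSpace.norm_eq]
      apply Real.sqrt_le_sqrt
      apply Finset.sum_le_sum
      intro i _
      have := ht i
      rw [Real.norm_eq_abs]
      nlinarith [abs_nonneg (w t i), sq_abs (w t i)]
    rw [Finset.sum_const, Finset.card_univ, Fintype.card_fin, nsmul_eq_mul] at h1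
    rw [Real.norm_eq_abs, abs_norm]
    calc ‖w t‖ ≤ Real.sqrt ((m : ℝ) * C_grad ^ 2) := h1
      _ = C_grad * Real.sqrt m := by
          rw [Real.sqrt_mul (by positivity), Real.sqrt_sq hgrad.le, mul_comm]
  -- L^{q₃} bound on ‖w‖
  have hw3 : eLpNorm (fun t => ‖w t‖) q₃ μ
      ≤ μ Set.univ ^ q₃.toReal⁻¹ * ENNReal.ofReal (C_grad * Real.sqrt m) :=
    eLpNorm_le_of_ae_bound hwnorm
  -- Hölder: first combine v and ‖w‖
  have hr : (1:ℝ≥0∞) / p = 1 / q₁ + 1 / ((1/q₂ + 1/q₃)⁻¹) := by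
    rw [one_div ((1/q₂ + 1/q₃)⁻¹), inv_inv, hpq, add_assoc]
  have hr' : (1:ℝ≥0∞) / ((1/q₂ + 1/q₃)⁻¹) = 1 / q₂ + 1 / q₃ := by
    rw [one_div, inv_inv]
  have hvw : eLpNorm (fun t => |v t| * ‖w t‖) ((1/q₂ + 1/q₃)⁻¹) μ
      ≤ eLpNorm v q₂ μ * eLpNorm (fun t => ‖w t‖) q₃ μ := by
    refine eLpNorm_le_eLpNorm_mul_eLpNorm'_of_norm (p := q₂) (q := q₃) (r := (1/q₂ + 1/q₃)⁻¹)
      hv_meas hw_meas.norm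
      (fun x y => |x| * y) 1 ?_ (hpqr := ⟨by rw [inv_inv]; simp only [one_div]⟩) |>.trans (by simp)
    filter_upwards with t
    simp [abs_mul, Real.norm_eq_abs, abs_of_nonneg (norm_nonneg (w t))]
  have huvw : eLpNorm (fun t => |u t| * (|v t| * ‖w t‖)) p μ
      ≤ eLpNorm u q₁ μ * eLpNorm (fun t => |v t| * ‖w t‖) ((1/q₂ + 1/q₃)⁻¹) μ := by
    refine eLpNorm_le_eLpNorm_mul_eLpNorm'_of_norm (p := q₁) (q := (1/q₂ + 1/q₃)⁻¹) (r := p)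
      hu_meas
      ((hv_meas.norm.mul hw_meas.norm).congr ?_) (fun x y => |x| * y) 1 ?_
        (hpqr := ⟨by rw [inv_inv, ← one_div p, hpq, add_assoc]; simp only [one_div]⟩) |>.trans (by simp)
    · filter_upwards with t; simp [Real.norm_eq_abs]
    · filter_upwards with t
      simp [abs_mul, Real.norm_eq_abs, abs_abs, abs_of_nonneg (norm_nonneg (w t))]
  -- pull out the factor 2
  have h2 : eLpNorm (fun t => 2 * |u t| * |v t| * ‖w t‖) p μ
      = 2 * eLpNorm (fun t => |u t| * (|v t| * ‖w t‖)) p μ := by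
    have heq : (fun t => 2 * |u t| * |v t| * ‖w t‖)
        = (2:ℝ) • (fun t => |u t| * (|v t| * ‖w t‖)) := by
      funext t; simp only [Pi.smul_apply, smul_eq_mul]; ring
    rw [heq, eLpNorm_const_smul]
    congr 1; exact_mod_cast Real.enorm_natCast 2
  rw [h2]
  calc 2 * eLpNorm (fun t => |u t| * (|v t| * ‖w t‖)) p μ
      ≤ 2 * (ENNReal.ofReal (C_CQ / m) * (ENNReal.ofReal C_C *
          (μ Set.univ ^ q₃.toReal⁻¹ * ENNReal.ofReal (C_grad * Real.sqrt m)))) := by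
        gcongr
        refine huvw.trans ?_
        gcongr
        exact hvw.trans (by gcongr)
    _ = ENNReal.ofReal (2 * C_C * C_grad * T ^ (1 / q₃.toReal) * C_CQ / Real.sqrt m) := by
        rw [hμuniv, ENNReal.ofReal_rpow_of_pos hT]
        rw [← ENNReal.ofReal_mul (by positivity), ← ENNReal.ofReal_mul (by positivity),
          ← ENNReal.ofReal_mul (by positivity)]
        have h2' : (2 : ℝ≥0∞) = ENNReal.ofReal 2 := by norm_num
        rw [h2', ← ENNReal.ofReal_mul (by norm_num)]
        congr 1
        have hmm : Real.sqrt m * Real.sqrt m = (m:ℝ) := Real.mul_self_sqrt (by positivity)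
        have hmne : (m:ℝ) ≠ 0 := by positivity
        rw [one_div]
        field_simp
        linear_combination hmm
end
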